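/- For every real number M > 0, every ε ∈ (0,1), and every real p ≥ 5/4, the integral ∫₀^ε r(0,x)^{-2p} · Ω(0,x)·r(0,x)² dx diverges (equals +∞); that is, the scalar curvature of the initial hypersurface Σ₀, which blows up like 1/r², fails to be in L^p(Σ₀) for all p ≥ 5/4. -/
import Mathlib
open MeasureTheory
open scoped ENNReal

/-- The Kruskal relation function `f_M(ρ) = (1 - ρ/(2M))·exp(ρ/(2M))`. -/
noncomputable def fM (M ρ : ℝ) : ℝ := (1 - ρ / (2 * M)) * Real.exp (ρ / (2 * M))
/-- The radius function in the `(τ,x)` coordinates: `r(τ,x) = r_M((1-τ)² - x²)`. -/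
noncomputable def rr (rM : ℝ → ℝ) (τ x : ℝ) : ℝ := rM ((1 - τ) ^ 2 - x ^ 2)
/-- The conformal factor `Ω²(τ,x) = (32M³/r(τ,x))·exp(-r(τ,x)/(2M))`. -/
noncomputable def Om2 (M : ℝ) (rM : ℝ → ℝ) (τ x : ℝ) : ℝ :=
  32 * M ^ 3 / rr rM τ x * Real.exp (-(rr rM τ x) / (2 * M))
/-- `Ω(τ,x) = √(Ω²(τ,x))`. -/
noncomputable def Om (M : ℝ) (rM : ℝ → ℝ) (τ x : ℝ) : ℝ := Real.sqrt (Om2 M rM τ x)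

lemma key_ineq {u : ℝ} (h0 : 0 ≤ u) (h1 : u ≤ 1) :
    (1 - u) * Real.exp u ≤ 1 - u ^ 2 / 4 := by
  have h := Real.exp_bound' h0 h1 (n := 2) (by norm_num)
  simp [Finset.sum_range_succ] at h
  nlinarith [Real.exp_pos u]

lemma lint_inv_top {δ : ℝ} (hδ : 0 < δ) :
    ∫⁻ x in Set.Ioo (0:ℝ) δ, ENNReal.ofReal x⁻¹ = ⊤ := by
  by_contra h
  have hint : IntegrableOn (fun x : ℝ => x⁻¹) (Set.Ioo 0 δ) := by
    refine ⟨(measurable_inv).aestronglyMeasurable, ?_⟩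
    rw [hasFiniteIntegral_iff_ofReal ?_]
    · exact lt_top_iff_ne_top.2 h
    · filter_upwards [ae_restrict_mem measurableSet_Ioo] with x hx
      exact inv_nonneg.2 hx.1.le
  have h2 : IntegrableOn (fun x : ℝ => x ^ (-1 : ℝ)) (Set.Ioo 0 δ) := by
    refine hint.congr_fun (fun x hx => ?_) measurableSet_Ioo
    rw [Real.rpow_neg_one]
  rw [intervalIntegral.integrableOn_Ioo_rpow_iff hδ] at h2
  linarith

/-- For every `M > 0`, every `ε ∈ (0,1)`, and every real `p ≥ 5/4`, the integral
`∫₀^ε r(0,x)^{-2p} · Ω(0,x)·r(0,x)² dx` diverges (equals `+∞`); that is, the scalar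
curvature of the initial hypersurface `Σ₀`, which blows up like `1/r²`, fails to be in
`L^p(Σ₀)` for all `p ≥ 5/4`. -/
theorem scalar_curvature_not_Lp (M : ℝ) (hM : 0 < M) (rM : ℝ → ℝ)
    (hrM : ∀ s : ℝ, s < 1 → 0 < rM s ∧ fM M (rM s) = s)
    (ε : ℝ) (hε0 : 0 < ε) (hε1 : ε < 1) (p : ℝ) (hp : 5 / 4 ≤ p) :
    ∫⁻ x in Set.Ioo (0 : ℝ) ε,
      ENNReal.ofReal (rr rM 0 x ^ (-(2 * p)) * (Om M rM 0 x * (rr rM 0 x) ^ 2)) = ⊤ := by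
  set c : ℝ := Real.sqrt (8 * M ^ 3) / (4 * M) with hc
  have hc0 : 0 < c := div_pos (Real.sqrt_pos.2 (by positivity)) (by linarith)
  set δ : ℝ := min ε (1 / (4 * M)) with hδdef
  have hδ0 : 0 < δ := lt_min hε0 (by positivity)
  have hδε : δ ≤ ε := min_le_left _ _
  have hbound : ∀ x ∈ Set.Ioo (0:ℝ) δ,
      c * x⁻¹ ≤ rr rM 0 x ^ (-(2 * p)) * (Om M rM 0 x * (rr rM 0 x) ^ 2) := by
    intro x hx
    obtain ⟨hx0, hxδ⟩ := hx
    have hx1 : x < 1 := lt_of_lt_of_le hxδ (le_trans (min_le_left _ _) hε1.le)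
    have hs : (1 - (0:ℝ)) ^ 2 - x ^ 2 < 1 := by nlinarith
    obtain ⟨hr0, hfr⟩ := hrM _ hs
    have hr0' : 0 < rr rM 0 x := hr0
    set r : ℝ := rr rM 0 x with hrdef
    have hfr' : (1 - r / (2 * M)) * Real.exp (r / (2 * M)) = 1 - x ^ 2 := by
      have : fM M r = (1 - (0:ℝ)) ^ 2 - x ^ 2 := hfr
      rw [fM] at this
      rw [this]; ring
    set u : ℝ := r / (2 * M) with hu
    have hu0 : 0 ≤ u := by positivity
    have hu1 : u < 1 := by
      by_contra hcon
      push_neg at hcon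
      have : (1 - u) * Real.exp u ≤ 0 :=
        mul_nonpos_of_nonpos_of_nonneg (by linarith) (Real.exp_pos u).le
      nlinarith
    have hkey := key_ineq hu0 hu1.le
    have hu2x : u ≤ 2 * x := by nlinarith
    have hru : r = 2 * M * u := by rw [hu]; field_simp
    have hr4Mx : r ≤ 4 * M * x := by nlinarith
    have hrle1 : r ≤ 1 := by
      have hxδ' : x ≤ 1 / (4 * M) := le_of_lt (lt_of_lt_of_le hxδ (min_le_right _ _))
      calc r ≤ 4 * M * x := hr4Mx
        _ ≤ 4 * M * (1 / (4 * M)) := mul_le_mul_of_nonneg_left hxδ' (by linarith)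
        _ = 1 := by field_simp
    have hOm : Real.sqrt (8 * M ^ 3) * r ^ (-(1:ℝ)/2) ≤ Om M rM 0 x := by
      have hexp : (1:ℝ)/4 ≤ Real.exp (-r / (2 * M)) := by
        have h1 : Real.exp (-r / (2 * M)) = (Real.exp u)⁻¹ := by
          rw [← Real.exp_neg, hu]; ring_nf
        rw [h1]
        have he4 : Real.exp u ≤ 4 := le_trans (Real.exp_le_exp.2 hu1.le)
          (by have := Real.exp_one_lt_d9; linarith)
        have := inv_anti₀ (Real.exp_pos u) he4
        linarith
      have hOm2 : 8 * M ^ 3 / r ≤ Om2 M rM 0 x := by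
        calc 8 * M ^ 3 / r = 32 * M ^ 3 / r * (1/4) := by ring
          _ ≤ 32 * M ^ 3 / r * Real.exp (-r / (2 * M)) :=
              mul_le_mul_of_nonneg_left hexp (by positivity)
          _ = Om2 M rM 0 x := rfl
      calc Real.sqrt (8 * M ^ 3) * r ^ (-(1:ℝ)/2)
          = Real.sqrt (8 * M ^ 3 / r) := by
            have hhalf : r ^ (-(1:ℝ)/2) = (Real.sqrt r)⁻¹ := by
              rw [Real.sqrt_eq_rpow, ← Real.rpow_neg hr0'.le]; norm_num
            rw [Real.sqrt_div (by positivity) r, hhalf, div_eq_mul_inv]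
        _ ≤ Real.sqrt (Om2 M rM 0 x) := Real.sqrt_le_sqrt hOm2
    have hpow : r ^ (-(1:ℝ)/2) ≤ r ^ (2 - 2 * p) := by
      apply Real.rpow_le_rpow_of_exponent_ge hr0' hrle1
      linarith
    have h1 : r ^ (-(2 * p)) * (Om M rM 0 x * r ^ 2) = r ^ (2 - 2 * p) * Om M rM 0 x := by
      have : r ^ (-(2 * p)) * (Om M rM 0 x * r ^ 2)
          = (r ^ (-(2 * p)) * r ^ ((2:ℕ):ℝ)) * Om M rM 0 x := by
        rw [Real.rpow_natCast]; ring
      have h2 : (-(2*p) + ((2:ℕ):ℝ)) = 2 - 2*p := by push_cast; ring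
      rw [this, ← Real.rpow_add hr0', h2]
    have e1 : r ^ (-(1:ℝ)/2) * r ^ (-(1:ℝ)/2) = r⁻¹ := by
      rw [← Real.rpow_add hr0']
      norm_num [Real.rpow_neg_one]
    have e2 : Real.sqrt (8 * M ^ 3) * (4 * M * x)⁻¹ = c * x⁻¹ := by
      rw [hc]; field_simp
    have i3 : (4 * M * x)⁻¹ ≤ r⁻¹ := inv_anti₀ hr0' hr4Mx
    calc c * x⁻¹ = Real.sqrt (8 * M ^ 3) * (4 * M * x)⁻¹ := e2.symm
      _ ≤ Real.sqrt (8 * M ^ 3) * r⁻¹ :=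
          mul_le_mul_of_nonneg_left i3 (Real.sqrt_nonneg _)
      _ = r ^ (-(1:ℝ)/2) * (Real.sqrt (8 * M ^ 3) * r ^ (-(1:ℝ)/2)) := by
          rw [← e1]; ring
      _ ≤ r ^ (2 - 2 * p) * (Real.sqrt (8 * M ^ 3) * r ^ (-(1:ℝ)/2)) :=
          mul_le_mul_of_nonneg_right hpow (by positivity)
      _ ≤ r ^ (2 - 2 * p) * Om M rM 0 x :=
          mul_le_mul_of_nonneg_left hOm (by positivity)
      _ = r ^ (-(2 * p)) * (Om M rM 0 x * r ^ 2) := h1.symm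
  rw [← top_le_iff]
  calc (⊤ : ℝ≥0∞) = ∫⁻ x in Set.Ioo (0:ℝ) δ, ENNReal.ofReal (c * x⁻¹) := by
        simp_rw [ENNReal.ofReal_mul hc0.le]
        rw [lintegral_const_mul' _ _ ENNReal.ofReal_ne_top, lint_inv_top hδ0,
          ENNReal.mul_top (ENNReal.ofReal_pos.2 hc0).ne']
    _ ≤ ∫⁻ x in Set.Ioo (0:ℝ) δ,
          ENNReal.ofReal (rr rM 0 x ^ (-(2 * p)) * (Om M rM 0 x * (rr rM 0 x) ^ 2)) := by
        refine lintegral_mono_ae ?_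
        filter_upwards [ae_restrict_mem measurableSet_Ioo] with x hx
        exact ENNReal.ofReal_le_ofReal (hbound x hx)
    _ ≤ _ := lintegral_mono_set (Set.Ioo_subset_Ioo_right hδε)
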